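/- (Correctness of Rule 1 of SPF.) Let u : Fin (m+1) → ℝ and set a = cardinality of {j : j < m ∧ u j < u 0} and b = cardinality of {j : 1 ≤ j ∧ u j < u m}. If a ≠ b, then for every pattern v : Fin (m+1) → ℝ such that the prefixes of u and v have the same relative order and the suffixes of u and v have the same relative order, u and v have the same relative order. In other words, when the prefix-rank of the first element differs from the suffix-rank of the last element, the prefix and suffix relative orders alone determine the full relative order of the window. -/

import Mathlib

/-- For a pattern `u` of length `m+1`, its prefix `(u 0, …, u (m-1))`. -/
def prefixPat {m : ℕ} {α : Type*} (u : Fin (m + 1) → α) : Fin m → α :=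
  fun j => u j.castSucc

/-- For a pattern `u` of length `m+1`, its suffix `(u 1, …, u m)`. -/
def suffixPat {m : ℕ} {α : Type*} (u : Fin (m + 1) → α) : Fin m → α :=
  fun j => u j.succ

/-- `p` occurs in the time series `t` at (0-based) ending position `i`:
the window `(t (i-m+1), …, t i)` has the same relative order as `p`. -/
def occursAt {n m : ℕ} {α : Type*} [LT α] (t : Fin n → ℝ) (p : Fin m → α) (i : ℕ) : Prop :=
  ∃ (h1 : m ≤ i + 1) (h2 : i < n),
    ∀ a b : Fin m,
      (t ⟨i + 1 - m + a.val, by have := a.isLt; omega⟩ <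
        t ⟨i + 1 - m + b.val, by have := b.isLt; omega⟩) ↔ p a < p b

/-- The support of `p` in `t`: the number of ending positions at which `p` occurs. -/
noncomputable def supCount {n m : ℕ} {α : Type*} [LT α] (t : Fin n → ℝ) (p : Fin m → α) : ℕ :=
  {i : ℕ | occursAt t p i}.ncard

lemma spf_le {m : ℕ} (u : Fin (m+1) → ℝ) (h : u 0 < u (Fin.last m)) :
    {j : Fin (m + 1) | (j : ℕ) < m ∧ u j < u 0}.ncard ≤
    {j : Fin (m + 1) | 1 ≤ (j : ℕ) ∧ u j < u (Fin.last m)}.ncard := by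
  apply Set.ncard_le_ncard _ (Set.toFinite _)
  rintro j ⟨hj, hju⟩
  refine ⟨?_, hju.trans h⟩
  by_contra hc
  have : j = 0 := by ext; simp only [Fin.val_zero]; omega
  subst this; exact lt_irrefl _ hju

lemma spf_ge {m : ℕ} (u : Fin (m+1) → ℝ) (h : u (Fin.last m) < u 0) :
    {j : Fin (m + 1) | 1 ≤ (j : ℕ) ∧ u j < u (Fin.last m)}.ncard ≤
    {j : Fin (m + 1) | (j : ℕ) < m ∧ u j < u 0}.ncard := by
  apply Set.ncard_le_ncard _ (Set.toFinite _)
  rintro j ⟨hj, hju⟩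
  refine ⟨?_, hju.trans h⟩
  by_contra hc
  have : j = Fin.last m := by ext; have := j.isLt; simp; omega
  subst this; exact lt_irrefl _ hju

lemma spf_eq {m : ℕ} (u : Fin (m+1) → ℝ) (h : u 0 = u (Fin.last m)) :
    {j : Fin (m + 1) | (j : ℕ) < m ∧ u j < u 0} =
    {j : Fin (m + 1) | 1 ≤ (j : ℕ) ∧ u j < u (Fin.last m)} := by
  ext j
  simp only [Set.mem_setOf_eq, ← h]
  constructor
  · rintro ⟨hj, hju⟩
    refine ⟨?_, hju⟩
    by_contra hc
    have : j = 0 := by ext; simp only [Fin.val_zero]; omega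
    subst this; exact lt_irrefl _ hju
  · rintro ⟨hj, hju⟩
    refine ⟨?_, hju⟩
    by_contra hc
    have hjm : (j:ℕ) = m := by have := j.isLt; omega
    have : j = Fin.last m := by ext; simpa using hjm
    subst this
    rw [h] at hju
    exact lt_irrefl _ hju


/-- Correctness of Rule 1 of SPF: when the prefix-rank of the first element
differs from the suffix-rank of the last element, the prefix and suffix
relative orders alone determine the full relative order of the window. -/
theorem same_relative_order_of_prefix_suffix_of_rank_ne {m : ℕ}
    (u : Fin (m + 1) → ℝ) (a b : ℕ)
    (ha : a = {j : Fin (m + 1) | (j : ℕ) < m ∧ u j < u 0}.ncard)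
    (hb : b = {j : Fin (m + 1) | 1 ≤ (j : ℕ) ∧ u j < u (Fin.last m)}.ncard)
    (hab : a ≠ b) :
    ∀ v : Fin (m + 1) → ℝ,
      (∀ i j, prefixPat u i < prefixPat u j ↔ prefixPat v i < prefixPat v j) →
      (∀ i j, suffixPat u i < suffixPat u j ↔ suffixPat v i < suffixPat v j) →
      (∀ i j, u i < u j ↔ v i < v j) := by
  intro v hpre hsuf
  rcases Nat.eq_zero_or_pos m with hm0 | hm
  · exfalso
    apply hab
    subst hm0
    have e1 : {j : Fin 1 | (j : ℕ) < 0 ∧ u j < u 0} = ∅ := by ext j; simp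
    have e2 : {j : Fin 1 | 1 ≤ (j : ℕ) ∧ u j < u (Fin.last 0)} = ∅ := by
      ext j; simp [Fin.eq_zero j]
    rw [ha, hb, e1, e2]
  have hpre' : ∀ i j : Fin (m+1), (i:ℕ) < m → (j:ℕ) < m → (u i < u j ↔ v i < v j) := by
    intro i j hi hj
    have := hpre ⟨i, hi⟩ ⟨j, hj⟩
    simp only [prefixPat, Fin.castSucc_mk] at this
    convert this using 3 <;> ext <;> simp
  have hsuf' : ∀ i j : Fin (m+1), 1 ≤ (i:ℕ) → 1 ≤ (j:ℕ) → (u i < u j ↔ v i < v j) := by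
    intro i j hi hj
    have hi' : (i:ℕ) - 1 < m := by have := i.isLt; omega
    have hj' : (j:ℕ) - 1 < m := by have := j.isLt; omega
    have := hsuf ⟨(i:ℕ)-1, hi'⟩ ⟨(j:ℕ)-1, hj'⟩
    simp only [suffixPat, Fin.succ_mk] at this
    convert this using 3 <;> ext <;> simp <;> omega
  have hsetA : {j : Fin (m + 1) | (j : ℕ) < m ∧ u j < u 0} =
      {j : Fin (m + 1) | (j : ℕ) < m ∧ v j < v 0} := by
    ext j
    simp only [Set.mem_setOf_eq]
    exact and_congr_right fun hj => hpre' j 0 hj (by simpa using hm)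
  have hsetB : {j : Fin (m + 1) | 1 ≤ (j : ℕ) ∧ u j < u (Fin.last m)} =
      {j : Fin (m + 1) | 1 ≤ (j : ℕ) ∧ v j < v (Fin.last m)} := by
    ext j
    simp only [Set.mem_setOf_eq]
    exact and_congr_right fun hj => hsuf' j (Fin.last m) hj (by simp; omega)
  have ha' : a = {j : Fin (m + 1) | (j : ℕ) < m ∧ v j < v 0}.ncard := by rw [ha, hsetA]
  have hb' : b = {j : Fin (m + 1) | 1 ≤ (j : ℕ) ∧ v j < v (Fin.last m)}.ncard := by
    rw [hb, hsetB]
  have hune : u 0 ≠ u (Fin.last m) := fun h => hab (by rw [ha, hb, spf_eq u h])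
  have hvne : v 0 ≠ v (Fin.last m) := fun h => hab (by rw [ha', hb', spf_eq v h])
  have key : u 0 < u (Fin.last m) ↔ v 0 < v (Fin.last m) := by
    rcases lt_trichotomy (u 0) (u (Fin.last m)) with hu | hu | hu
    · have hab1 : a < b := lt_of_le_of_ne (ha ▸ hb ▸ spf_le u hu) hab
      rcases lt_trichotomy (v 0) (v (Fin.last m)) with hv | hv | hv
      · simp [hu, hv]
      · exact absurd hv hvne
      · exfalso
        have : b ≤ a := ha' ▸ hb' ▸ spf_ge v hv
        omega
    · exact absurd hu hune
    · have hab1 : b < a := lt_of_le_of_ne (ha ▸ hb ▸ spf_ge u hu) (Ne.symm hab)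
      rcases lt_trichotomy (v 0) (v (Fin.last m)) with hv | hv | hv
      · exfalso
        have : a ≤ b := ha' ▸ hb' ▸ spf_le v hv
        omega
      · exact absurd hv hvne
      · constructor
        · intro h; exact absurd h (not_lt.mpr hu.le)
        · intro h; exact absurd h (not_lt.mpr hv.le)
  have key' : u (Fin.last m) < u 0 ↔ v (Fin.last m) < v 0 := by
    rcases lt_trichotomy (u 0) (u (Fin.last m)) with hu | hu | hu
    · have hv := key.mp hu
      exact ⟨fun h => absurd h (not_lt.mpr hu.le), fun h => absurd h (not_lt.mpr hv.le)⟩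
    · exact absurd hu hune
    · have hv : ¬ v 0 < v (Fin.last m) := fun h => absurd (key.mpr h) (not_lt.mpr hu.le)
      have hv' : v (Fin.last m) < v 0 := by
        rcases lt_trichotomy (v 0) (v (Fin.last m)) with h | h | h
        · exact absurd h hv
        · exact absurd h hvne
        · exact h
      simp [hu, hv']
  intro i j
  rcases Nat.lt_or_ge (i : ℕ) m with hi | hi
  · rcases Nat.lt_or_ge (j : ℕ) m with hj | hj
    · exact hpre' i j hi hj
    · -- j = last
      have hjl : j = Fin.last m := by ext; have := j.isLt; simp; omega
      subst hjl
      rcases Nat.eq_zero_or_pos (i : ℕ) with hi0 | hi0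
      · have : i = 0 := by ext; simp only [Fin.val_zero]; omega
        subst this; exact key
      · exact hsuf' i (Fin.last m) hi0 (by simp; omega)
  · have hil : i = Fin.last m := by ext; have := i.isLt; simp; omega
    subst hil
    rcases Nat.eq_zero_or_pos (j : ℕ) with hj0 | hj0
    · have : j = 0 := by ext; simp only [Fin.val_zero]; omega
      subst this; exact key'
    · exact hsuf' (Fin.last m) j (by simp; omega) hj0
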